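/- Let E be a real inner product space, K ⊆ E a convex set, λ, G > 0, and ℓ : E → ℝ a differentiable function with gradient ∇ℓ such that: (i) for all μ, μ₀ ∈ K, ℓ(μ) − ℓ(μ₀) ≤ ⟨∇ℓ(μ), μ − μ₀⟩ − λ‖μ − μ₀‖², and (ii) ‖∇ℓ(μ)‖ ≤ G for all μ ∈ K. Let μ* ∈ K be a minimiser of ℓ over K. Let K ≥ 1 (number of iterations) and let η′₁, …, η′_K > 0 satisfy 1/η′₁ ≤ λ and 1/η′_j − λ ≤ 1/η′_{j−1} for 2 ≤ j ≤ K. Starting from x₀ ∈ K, define the projected gradient iterates: for 0 ≤ j ≤ K−1, x_{j+1} is a metric projection onto K of x_j − η′_{j+1}∇ℓ(x_j) (i.e. x_{j+1} ∈ K and ‖x_j − η′_{j+1}∇ℓ(x_j) − x_{j+1}‖ ≤ ‖x_j − η′_{j+1}∇ℓ(x_j) − y‖ for all y ∈ K). Then the Polyak average ν := (1/K)Σ_{j=1}^{K} x_j satisfies ℓ(ν) − ℓ(μ*) ≤ (G²/K) Σ_{j=1}^{K} η′_j. -/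

import Mathlib

open RealInnerProductSpace Finset

set_option maxHeartbeats 1000000 in
/-- Guarantee for the CONSTRUCT procedure (Lemma `GD_add_know`): running `K` steps of
projected gradient descent on a `λ`-strongly convex loss `ℓ` (in the paper's convention)
with gradients bounded by `G` and step sizes `η'` satisfying `1/η'₁ ≤ λ` and
`1/η'_j − λ ≤ 1/η'_{j−1}`, the Polyak average `ν = (1/K) Σ_{j=1}^K x_j` satisfies
`ℓ(ν) − ℓ(μ*) ≤ (G²/K) Σ_{j=1}^K η'_j`. -/
theorem construct_guarantee {E : Type*} [NormedAddCommGroup E] [InnerProductSpace ℝ E]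
    [CompleteSpace E]
    (K : Set E) (hK : Convex ℝ K) (lam G : ℝ) (hlam : 0 < lam) (hG : 0 < G)
    (ℓ : E → ℝ) (g : E → E) (hdiff : ∀ x : E, HasGradientAt ℓ (g x) x)
    (hsc : ∀ μ ∈ K, ∀ μ₀ ∈ K, ℓ μ - ℓ μ₀ ≤ ⟪g μ, μ - μ₀⟫ - lam * ‖μ - μ₀‖ ^ 2)
    (hGb : ∀ μ ∈ K, ‖g μ‖ ≤ G)
    (μstar : E) (hμstarK : μstar ∈ K) (hmin : ∀ y ∈ K, ℓ μstar ≤ ℓ y)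
    (N : ℕ) (hN : 1 ≤ N) (η : ℕ → ℝ)
    (hηpos : ∀ j, 1 ≤ j → j ≤ N → 0 < η j)
    (hη1 : 1 / η 1 ≤ lam)
    (hηrec : ∀ j, 2 ≤ j → j ≤ N → 1 / η j - lam ≤ 1 / η (j - 1))
    (x : ℕ → E) (hx0 : x 0 ∈ K)
    (hiter : ∀ j < N, x (j + 1) ∈ K ∧
      ∀ y ∈ K, ‖x j - η (j + 1) • g (x j) - x (j + 1)‖ ≤ ‖x j - η (j + 1) • g (x j) - y‖)
    (ν : E) (hν : ν = (N : ℝ)⁻¹ • ∑ j ∈ Icc 1 N, x j) :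
    ℓ ν - ℓ μstar ≤ G ^ 2 / N * ∑ j ∈ Icc 1 N, η j := by
  have hNpos : (0:ℝ) < N := by exact_mod_cast hN
  -- membership of the iterates
  have hmem : ∀ j, j ≤ N → x j ∈ K := by
    intro j hj
    cases j with
    | zero => exact hx0
    | succ n => exact (hiter n (by omega)).1
  -- abbreviations
  obtain ⟨a, ha⟩ : ∃ a : ℕ → ℝ, ∀ j, a j = ℓ (x j) - ℓ μstar :=
    ⟨fun j => ℓ (x j) - ℓ μstar, fun _ => rfl⟩
  obtain ⟨D, hD⟩ : ∃ D : ℕ → ℝ, ∀ j, D j = ‖x j - μstar‖ ^ 2 :=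
    ⟨fun j => ‖x j - μstar‖ ^ 2, fun _ => rfl⟩
  have hDnonneg : ∀ j, 0 ≤ D j := fun j => (hD j).symm ▸ sq_nonneg _
  have hanonneg : ∀ j, j ≤ N → 0 ≤ a j := fun j hj =>
    (ha j).symm ▸ sub_nonneg.mpr (hmin _ (hmem j hj))
  -- variational inequality for the projection
  have hVI : ∀ j < N, ∀ y ∈ K,
      ⟪x j - η (j+1) • g (x j) - x (j+1), y - x (j+1)⟫ ≤ 0 := by
    intro j hj y hy
    obtain ⟨hmem', hproj⟩ := hiter j hj
    set z := x j - η (j+1) • g (x j) with hz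
    have hinf : ‖z - x (j+1)‖ = ⨅ w : K, ‖z - w‖ := by
      haveI : Nonempty K := ⟨⟨x (j+1), hmem'⟩⟩
      apply le_antisymm
      · exact le_ciInf fun w => hproj w w.2
      · exact ciInf_le ⟨0, fun b ⟨w, hw⟩ => hw ▸ norm_nonneg _⟩ (⟨x (j+1), hmem'⟩ : K)
    exact (norm_eq_iInf_iff_real_inner_le_zero hK hmem').mp hinf y hy
  -- contraction of the distance under projection
  have hDcontr : ∀ j < N, D (j+1) ≤ ‖x j - η (j+1) • g (x j) - μstar‖ ^ 2 := by
    intro j hj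
    have h1 := hVI j hj μstar hμstarK
    set z := x j - η (j+1) • g (x j) with hz
    have key : z - μstar = (z - x (j+1)) + (x (j+1) - μstar) := by abel
    have h2 : ⟪z - x (j+1), x (j+1) - μstar⟫ = -⟪z - x (j+1), μstar - x (j+1)⟫ := by
      rw [← inner_neg_right]; congr 1; abel
    have h3 := norm_add_sq_real (z - x (j+1)) (x (j+1) - μstar)
    rw [← key] at h3
    rw [hD (j+1)]
    nlinarith [sq_nonneg ‖z - x (j+1)‖]
  -- the basic per-step inequality
  have hstep : ∀ j < N,
      a j ≤ 1/(2 * η (j+1)) * (D j - D (j+1)) + η (j+1)/2 * G^2 - lam * D j := by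
    intro j hj
    have hηp : 0 < η (j+1) := hηpos (j+1) (by omega) (by omega)
    have hxjK : x j ∈ K := hmem j (by omega)
    have hgb : ‖g (x j)‖ ≤ G := hGb _ hxjK
    have hgc : ‖g (x j)‖ ^ 2 ≤ G ^ 2 := by
      nlinarith [norm_nonneg (g (x j))]
    have hsc' := hsc (x j) hxjK μstar hμstarK
    have hD' := hDcontr j hj
    have hDj : D j = ‖x j - μstar‖ ^ 2 := hD j
    have hexp : ‖x j - η (j+1) • g (x j) - μstar‖ ^ 2
        = D j - 2 * η (j+1) * ⟪g (x j), x j - μstar⟫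
          + η (j+1)^2 * ‖g (x j)‖ ^ 2 := by
      have key : x j - η (j+1) • g (x j) - μstar
          = (x j - μstar) - η (j+1) • g (x j) := by abel
      rw [key, norm_sub_sq_real, real_inner_smul_right, norm_smul,
        real_inner_comm, hDj, mul_pow, Real.norm_eq_abs, sq_abs]
      ring
    rw [hexp] at hD'
    have hP : ⟪g (x j), x j - μstar⟫
        ≤ 1/(2 * η (j+1)) * (D j - D (j+1)) + η (j+1)/2 * G^2 := by
      have heq : 1/(2 * η (j+1)) * (D j - D (j+1)) + η (j+1)/2 * G^2
          = ((D j - D (j+1)) + η (j+1)^2 * G^2) / (2 * η (j+1)) := by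
        field_simp
      rw [heq, le_div_iff₀ (by positivity)]
      nlinarith
    rw [ha j]
    rw [← hDj] at hsc'
    linarith [hsc', hP]
  -- telescoping sum with potential
  have main : ∀ m, 1 ≤ m → m ≤ N →
      (∑ j ∈ range m, a j) + 1/(2 * η m) * D m ≤ G^2/2 * ∑ j ∈ Icc 1 m, η j := by
    intro m hm
    induction m, hm using Nat.le_induction with
    | base =>
      intro h1N
      have hηp : 0 < η 1 := hηpos 1 le_rfl h1N
      have hc0 : 1/(2 * η 1) ≤ lam := by
        rw [div_le_iff₀ (by positivity)]
        rw [div_le_iff₀ hηp] at hη1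
        nlinarith
      have h := hstep 0 (by omega)
      simp only [range_one, sum_singleton, Icc_self]
      nlinarith [hDnonneg 0, hDnonneg 1]
    | succ m hm ih =>
      intro hmN
      have ih' := ih (by omega)
      have hηp : 0 < η (m+1) := hηpos (m+1) (by omega) hmN
      have hηp' : 0 < η m := hηpos m (by omega) (by omega)
      have hrec : 1/η (m+1) - lam ≤ 1/η m := by
        have := hηrec (m+1) (by omega) hmN
        simpa using this
      have hcoef : 1/(2 * η (m+1)) - lam ≤ 1/(2 * η m) := by
        have h1 : 1/(2 * η (m+1)) = (1/η (m+1))/2 := by ring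
        have h2 : 1/(2 * η m) = (1/η m)/2 := by ring
        rw [h1, h2]; linarith
      have h := hstep m (by omega)
      rw [Finset.sum_range_succ, Finset.sum_Icc_succ_top (by omega : 1 ≤ m + 1)]
      have hDm := hDnonneg m
      nlinarith [mul_le_mul_of_nonneg_right hcoef hDm]
  have mainN := main N hN le_rfl
  -- bound on the last iterate
  have hlast : a N ≤ G^2/2 * ∑ j ∈ Icc 1 N, η j := by
    have hsc' := hsc (x N) (hmem N le_rfl) μstar hμstarK
    have hgb : ‖g (x N)‖ ≤ G := hGb _ (hmem N le_rfl)
    have haNd : a N = ℓ (x N) - ℓ μstar := ha N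
    have hinner : ⟪g (x N), x N - μstar⟫ ≤ G * ‖x N - μstar‖ := by
      calc ⟪g (x N), x N - μstar⟫ ≤ ‖g (x N)‖ * ‖x N - μstar‖ :=
            real_inner_le_norm _ _
        _ ≤ G * ‖x N - μstar‖ :=
            mul_le_mul_of_nonneg_right hgb (norm_nonneg _)
    have hr := norm_nonneg (x N - μstar)
    have hupper : a N ≤ G * ‖x N - μstar‖ - lam * ‖x N - μstar‖ ^ 2 := by
      rw [haNd]; linarith
    have h4 : 4 * lam * a N ≤ G^2 := by
      nlinarith [mul_nonneg hlam.le (sub_nonneg.mpr hupper),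
        sq_nonneg (G - 2*lam*‖x N - μstar‖)]
    have hη1p : 0 < η 1 := hηpos 1 le_rfl hN
    have hη1l : 1 ≤ lam * η 1 := by
      rw [div_le_iff₀ hη1p] at hη1; linarith
    have hsumge : η 1 ≤ ∑ j ∈ Icc 1 N, η j := by
      apply Finset.single_le_sum (f := η)
      · intro i hi
        simp only [mem_Icc] at hi
        exact (hηpos i hi.1 hi.2).le
      · simp only [mem_Icc]; omega
    have hmul : G^2 * 1 ≤ G^2 * (lam * η 1) :=
      mul_le_mul_of_nonneg_left hη1l (sq_nonneg G)
    have h5 : lam * a N ≤ lam * (G^2/2 * η 1) := by linarith [hmul, h4, sq_nonneg G]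
    have hkey : a N ≤ G^2/2 * η 1 := le_of_mul_le_mul_left h5 hlam
    have h6 : G^2/2 * η 1 ≤ G^2/2 * ∑ j ∈ Icc 1 N, η j :=
      mul_le_mul_of_nonneg_left hsumge (by positivity)
    linarith
  -- rewriting the sum over Icc 1 N
  have h1 : ∑ j ∈ Icc 1 N, a j = ∑ j ∈ range N, a j + a N - a 0 := by
    have e1 : range (N+1) = insert 0 (Icc 1 N) := by
      ext i; simp only [mem_range, mem_insert, mem_Icc]; omega
    have e2 := Finset.sum_range_succ a N
    rw [e1, Finset.sum_insert (by simp)] at e2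
    linarith
  -- bound on the sum over 1..N
  have hsumbound : ∑ j ∈ Icc 1 N, a j ≤ G^2 * ∑ j ∈ Icc 1 N, η j := by
    have hηN : 0 < η N := hηpos N hN le_rfl
    have hnn : 0 ≤ 1/(2 * η N) * D N :=
      mul_nonneg (by positivity) (hDnonneg N)
    have ha0 := hanonneg 0 (by omega)
    linarith
  -- ν is in K
  have hνK : ν ∈ K := by
    rw [hν, Finset.smul_sum]
    apply hK.sum_mem
    · intro i _; positivity
    · rw [Finset.sum_const, Nat.card_Icc]
      simp only [Nat.add_sub_cancel, nsmul_eq_mul]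
      field_simp
    · intro i hi
      simp only [mem_Icc] at hi
      exact hmem i hi.2
  -- Jensen step
  have hNν : (N : ℝ) • ν = ∑ j ∈ Icc 1 N, x j := by
    rw [hν, smul_smul, mul_inv_cancel₀ (ne_of_gt hNpos), one_smul]
  have hJ : (N : ℝ) * ℓ ν ≤ ∑ j ∈ Icc 1 N, ℓ (x j) := by
    have hterm : ∀ j ∈ Icc 1 N, ℓ ν - ℓ (x j) ≤ ⟪g ν, ν - x j⟫ := by
      intro j hj
      simp only [mem_Icc] at hj
      have h := hsc ν hνK (x j) (hmem j hj.2)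
      have h0 : 0 ≤ lam * ‖ν - x j‖ ^ 2 := mul_nonneg hlam.le (sq_nonneg _)
      linarith
    have hsum := Finset.sum_le_sum hterm
    rw [← inner_sum] at hsum
    have hzero : ∑ j ∈ Icc 1 N, (ν - x j) = 0 := by
      rw [Finset.sum_sub_distrib, Finset.sum_const, Nat.card_Icc,
        Nat.add_sub_cancel, ← Nat.cast_smul_eq_nsmul ℝ, hNν, sub_self]
    rw [hzero, inner_zero_right] at hsum
    rw [Finset.sum_sub_distrib, Finset.sum_const, Nat.card_Icc,
      Nat.add_sub_cancel, nsmul_eq_mul] at hsum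
    linarith
  -- conclusion
  have hsa : ∑ j ∈ Icc 1 N, a j
      = ∑ j ∈ Icc 1 N, ℓ (x j) - (N : ℝ) * ℓ μstar := by
    rw [Finset.sum_congr rfl (fun j _ => ha j)]
    rw [Finset.sum_sub_distrib, Finset.sum_const, Nat.card_Icc,
      Nat.add_sub_cancel, nsmul_eq_mul]
  rw [div_mul_eq_mul_div, le_div_iff₀ hNpos]
  have := hsumbound
  rw [hsa] at this
  nlinarith
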